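/- Define τ : ℝ → ℝ by: τ(x) = 0 for x ≤ 0; τ(x) = x for 0 ≤ x ≤ π/2; τ(x) = −x + Nπ/2 for (N−1)π/2 ≤ x ≤ (N+1)π/2 when N is a positive integer with N ≡ 2 (mod 4); and τ(x) = x − Nπ/2 for (N−1)π/2 ≤ x ≤ (N+1)π/2 when N is a positive integer with N ≡ 0 (mod 4). Then: (i) |τ(x) − τ(y)| ≤ |x − y| for all x, y ∈ ℝ; (ii) for Re s > 0 one has ∫₀^∞ τ(x) e^{−sx} dx = (1 − e^{−πs/2})² / (s²(1 + e^{−πs})), and the right-hand side extends to an analytic function on the open strip {s ∈ ℂ : |Im s| < 1} (the singularity at s = 0 being removable); (iii) limsup_{x→∞} |τ(x)| = π/2. -/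

import Mathlib

open MeasureTheory Filter

section ZigZagProofAux
open Metric


noncomputable section ZigZagAux

private def zc (k : ℤ) : ℝ := Real.pi/2 + 2*Real.pi*k

private def zS : Set ℝ := Set.range zc

private lemma zc_mem (k : ℤ) : zc k ∈ zS := Set.mem_range_self k

private lemma zS_infDist (x : ℝ) (k : ℤ) (h : |x - zc k| ≤ Real.pi) :
    Metric.infDist x zS = |x - zc k| := by
  refine le_antisymm ?_ ?_
  · have := Metric.infDist_le_dist_of_mem (x := x) (zc_mem k)
    rwa [Real.dist_eq] at this
  · by_contra hlt
    push_neg at hlt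
    obtain ⟨y, ⟨j, rfl⟩, hy⟩ := (Metric.infDist_lt_iff ⟨zc k, zc_mem k⟩).1 hlt
    rw [Real.dist_eq] at hy
    have hjk : j ≠ k := by
      rintro rfl; exact absurd hy (lt_irrefl _)
    have h2 : (2:ℝ)*Real.pi ≤ |zc j - zc k| := by
      have he : zc j - zc k = 2*Real.pi*((j:ℝ) - k) := by unfold zc; ring
      rw [he, abs_mul, abs_of_pos (by positivity : (0:ℝ) < 2*Real.pi)]
      have h1 : (1:ℝ) ≤ |(j:ℝ) - k| := by
        rw [show ((j:ℝ) - k) = ((j - k : ℤ) : ℝ) by push_cast; ring, ← Int.cast_abs]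
        exact_mod_cast Int.one_le_abs (sub_ne_zero.mpr hjk)
      nlinarith [Real.pi_pos]
    have tri : |zc j - zc k| ≤ |zc j - x| + |x - zc k| := abs_sub_le _ _ _
    rw [abs_sub_comm (zc j) x] at tri
    linarith

private def gZ (x : ℝ) : ℝ := Real.pi/2 - Metric.infDist (max x 0) zS

private lemma gZ_lip (x y : ℝ) : |gZ x - gZ y| ≤ |x - y| := by
  have h1 : |Metric.infDist (max x 0) zS - Metric.infDist (max y 0) zS|
      ≤ dist (max x 0) (max y 0) := by
    rw [abs_sub_le_iff]
    constructor
    · have := Metric.infDist_le_infDist_add_dist (x := max x 0) (y := max y 0) (s := zS)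
      linarith
    · have := Metric.infDist_le_infDist_add_dist (x := max y 0) (y := max x 0) (s := zS)
      rw [dist_comm] at this
      linarith
  have h2 : dist (max x 0) (max y 0) ≤ |x - y| := by
    rw [Real.dist_eq]; exact abs_max_sub_max_le_abs x y 0
  calc |gZ x - gZ y|
      = |Metric.infDist (max x 0) zS - Metric.infDist (max y 0) zS| := by
        unfold gZ; rw [show Real.pi/2 - Metric.infDist (max x 0) zS
          - (Real.pi/2 - Metric.infDist (max y 0) zS)
          = -(Metric.infDist (max x 0) zS - Metric.infDist (max y 0) zS) by ring, abs_neg]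
    _ ≤ |x - y| := le_trans h1 h2

private lemma tau_exN (x : ℝ) (hx : Real.pi/2 ≤ x) :
    ∃ N : ℕ, 0 < N ∧ N % 2 = 0 ∧ ((N:ℝ)-1)*(Real.pi/2) ≤ x ∧ x ≤ ((N:ℝ)+1)*(Real.pi/2) := by
  have hπ := Real.pi_pos
  set k := round (x/Real.pi) with hk
  have hk1 : 1 ≤ k := by
    rw [hk, round_eq]
    refine Int.le_floor.2 ?_
    push_cast
    have : (1:ℝ)/2 ≤ x/Real.pi := by
      rw [le_div_iff₀ hπ]; linarith
    linarith
  have habs : |x/Real.pi - k| ≤ 1/2 := abs_sub_round _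
  have habs2 : |x - k*Real.pi| ≤ Real.pi/2 := by
    have he : x - k*Real.pi = (x/Real.pi - k)*Real.pi := by field_simp
    rw [he, abs_mul, abs_of_pos hπ]
    nlinarith [abs_nonneg (x/Real.pi - (k:ℝ))]
  obtain ⟨hA, hB⟩ := abs_le.1 habs2
  have hcast : ((2 * k.toNat : ℕ) : ℝ) = 2*(k:ℝ) := by
    have h1 : ((k.toNat : ℤ) : ℝ) = (k:ℝ) := by
      rw [Int.toNat_of_nonneg (by omega)]
    push_cast at h1 ⊢
    linarith
  refine ⟨2 * k.toNat, by omega, by omega, ?_, ?_⟩ <;> rw [hcast] <;> nlinarith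


section TauFacts
variable (τ : ℝ → ℝ)
    (hτ0 : ∀ x : ℝ, x ≤ 0 → τ x = 0)
    (hτ1 : ∀ x : ℝ, 0 ≤ x → x ≤ Real.pi / 2 → τ x = x)
    (hτ2 : ∀ N : ℕ, 0 < N → N % 4 = 2 → ∀ x : ℝ,
      ((N : ℝ) - 1) * (Real.pi / 2) ≤ x → x ≤ ((N : ℝ) + 1) * (Real.pi / 2) →
      τ x = -x + (N : ℝ) * (Real.pi / 2))
    (hτ3 : ∀ N : ℕ, 0 < N → N % 4 = 0 → ∀ x : ℝ,
      ((N : ℝ) - 1) * (Real.pi / 2) ≤ x → x ≤ ((N : ℝ) + 1) * (Real.pi / 2) →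
      τ x = x - (N : ℝ) * (Real.pi / 2))

include hτ0 hτ1 hτ2 hτ3 in
private lemma tau_eq_gZ : ∀ x : ℝ, τ x = gZ x := by
  intro x
  have hπ := Real.pi_pos
  rcases le_or_gt x 0 with hx | hx
  · rw [hτ0 x hx]
    unfold gZ
    rw [max_eq_right hx, zS_infDist 0 0 (by
      unfold zc; rw [abs_of_nonpos (by linarith)]; push_cast; linarith)]
    unfold zc
    rw [abs_of_nonpos (by push_cast; linarith)]
    push_cast
    ring
  · have hx0 : max x 0 = x := max_eq_left hx.le
    rcases le_or_gt x (Real.pi/2) with h1 | h1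
    · rw [hτ1 x hx.le h1]
      unfold gZ
      rw [hx0, zS_infDist x 0 (by
        unfold zc; rw [abs_of_nonpos (by push_cast; linarith)]; push_cast; linarith)]
      unfold zc
      rw [abs_of_nonpos (by push_cast; linarith)]
      push_cast
      ring
    · obtain ⟨N, hN0, hN2, hxl, hxr⟩ := tau_exN x h1.le
      rcases (show N % 4 = 2 ∨ N % 4 = 0 by omega) with h4 | h4
      · obtain ⟨m, hm⟩ : ∃ m : ℕ, N = 4*m + 2 := ⟨N/4, by omega⟩
        have hNr : (N:ℝ) = 4*(m:ℝ)+2 := by rw [hm]; push_cast; ring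
        rw [hNr] at hxl hxr
        rw [hτ2 N hN0 h4 x (by rw [hNr]; exact hxl) (by rw [hNr]; exact hxr), hNr]
        unfold gZ
        rw [hx0]
        have hzc : zc (m:ℤ) = Real.pi/2 + 2*Real.pi*m := by unfold zc; push_cast; ring
        have h5 : |x - zc (m:ℤ)| = x - zc (m:ℤ) := abs_of_nonneg (by rw [hzc]; nlinarith)
        rw [zS_infDist x m (by rw [h5, hzc]; nlinarith), h5, hzc]
        ring
      · obtain ⟨m, hm⟩ : ∃ m : ℕ, N = 4*m := ⟨N/4, by omega⟩
        have hNr : (N:ℝ) = 4*(m:ℝ) := by rw [hm]; push_cast; ring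
        rw [hNr] at hxl hxr
        rw [hτ3 N hN0 h4 x (by rw [hNr]; exact hxl) (by rw [hNr]; exact hxr), hNr]
        unfold gZ
        rw [hx0]
        have hzc : zc (m:ℤ) = Real.pi/2 + 2*Real.pi*m := by unfold zc; push_cast; ring
        have h5 : |x - zc (m:ℤ)| = zc (m:ℤ) - x := by
          rw [abs_of_nonpos (by rw [hzc]; nlinarith)]; ring
        rw [zS_infDist x m (by rw [h5, hzc]; nlinarith), h5, hzc]
        ring

include hτ0 hτ1 hτ2 hτ3 in
private lemma tau_abs_le : ∀ x : ℝ, |τ x| ≤ Real.pi/2 := by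
  intro x
  have hπ := Real.pi_pos
  rcases le_or_gt x 0 with hx | hx
  · rw [hτ0 x hx]; rw [abs_zero]; linarith
  · rcases le_or_gt x (Real.pi/2) with h1 | h1
    · rw [hτ1 x hx.le h1, abs_of_nonneg hx.le]; linarith
    · obtain ⟨N, hN0, hN2, hxl, hxr⟩ := tau_exN x h1.le
      rcases (show N % 4 = 2 ∨ N % 4 = 0 by omega) with h4 | h4
      · rw [hτ2 N hN0 h4 x hxl hxr, abs_le]
        constructor <;> nlinarith
      · rw [hτ3 N hN0 h4 x hxl hxr, abs_le]
        constructor <;> nlinarith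

include hτ1 hτ3 in
private lemma tau_peak : ∀ k : ℕ, τ (Real.pi/2 + 2*Real.pi*k) = Real.pi/2 := by
  intro k
  have hπ := Real.pi_pos
  rcases k with _ | k
  · push_cast
    rw [show Real.pi/2 + 2*Real.pi*(0:ℝ) = Real.pi/2 by ring]
    exact hτ1 _ (by linarith) le_rfl
  · have hN0 : 0 < 4*(k+1) := by omega
    have hN4 : (4*(k+1)) % 4 = 0 := by omega
    have hcast : ((4*(k+1) : ℕ) : ℝ) = 4*(k:ℝ)+4 := by push_cast; ring
    rw [hτ3 (4*(k+1)) hN0 hN4 _ (by rw [hcast]; push_cast; nlinarith)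
      (by rw [hcast]; push_cast; nlinarith), hcast]
    push_cast
    ring

include hτ1 hτ2 hτ3 in
private lemma tau_anti : ∀ x : ℝ, 0 ≤ x → τ (x + Real.pi) = -τ x := by
  intro x hx
  have hπ := Real.pi_pos
  rcases le_or_gt x (Real.pi/2) with h1 | h1
  · rw [hτ1 x hx h1, hτ2 2 (by omega) (by omega) (x+Real.pi)
      (by push_cast; linarith) (by push_cast; linarith)]
    push_cast
    ring
  · obtain ⟨N, hN0, hN2, hxl, hxr⟩ := tau_exN x h1.le
    have hl' : (((N+2:ℕ):ℝ)-1)*(Real.pi/2) ≤ x + Real.pi := by push_cast; nlinarith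
    have hr' : x + Real.pi ≤ (((N+2:ℕ):ℝ)+1)*(Real.pi/2) := by push_cast; nlinarith
    rcases (show N % 4 = 2 ∨ N % 4 = 0 by omega) with h4 | h4
    · rw [hτ2 N hN0 h4 x hxl hxr, hτ3 (N+2) (by omega) (by omega) _ hl' hr']
      push_cast
      ring
    · rw [hτ3 N hN0 h4 x hxl hxr, hτ2 (N+2) (by omega) (by omega) _ hl' hr']
      push_cast
      ring

end TauFacts

end ZigZagAux

private lemma integral_linear_exp (s : ℂ) (hs : s ≠ 0) (c d : ℂ) (a b : ℝ) :
    ∫ x in a..b, (c + d * (x:ℂ)) * Complex.exp (-(s * x)) =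
      Complex.exp (-(s*b)) * (-(c + d*b)/s - d/s^2)
      - Complex.exp (-(s*a)) * (-(c + d*a)/s - d/s^2) := by
  have key : ∀ x : ℝ, HasDerivAt (fun y : ℝ => Complex.exp (-(s*y)) * (-(c + d*y)/s - d/s^2))
      ((c + d*x) * Complex.exp (-(s*x))) x := by
    intro x
    have h1 : HasDerivAt (fun y : ℝ => Complex.exp (-(s*y))) (Complex.exp (-(s*x)) * (-s)) x := by
      have h0 : HasDerivAt (fun z : ℂ => -(s*z)) (-s) (x:ℂ) := by
        have h := ((hasDerivAt_id ((x:ℝ):ℂ)).const_mul s).neg; simp only [id_eq, mul_one] at h; exact h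
      exact h0.comp_ofReal.cexp
    have h2 : HasDerivAt (fun y : ℝ => (-(c + d*y)/s - d/s^2 : ℂ)) (-d/s) x := by
      have h0 : HasDerivAt (fun z : ℂ => -(c + d*z)/s - d/s^2) (-d/s) (x:ℂ) := by
        have hz : HasDerivAt (fun z : ℂ => -(c + d*z)/s) (-d/s) (x:ℂ) := by
          simpa using (((hasDerivAt_id ((x:ℝ):ℂ)).const_mul d).const_add c).neg.div_const s
        simpa using hz.sub_const (d/s^2)
      exact h0.comp_ofReal
    have h3 := h1.mul h2
    refine h3.congr_deriv ?_
    field_simp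
    ring
  have hcont : Continuous (fun x : ℝ => (c + d*(x:ℂ)) * Complex.exp (-(s*x))) := by
    apply Continuous.mul
    · exact continuous_const.add (continuous_const.mul Complex.continuous_ofReal)
    · exact Complex.continuous_exp.comp ((continuous_const.mul Complex.continuous_ofReal).neg)
  exact intervalIntegral.integral_eq_sub_of_hasDerivAt (fun x _ => key x)
    (hcont.intervalIntegrable a b)

private lemma laplace_eval (τ : ℝ → ℝ) (hcτ : Continuous τ)
    (hab : ∀ x, |τ x| ≤ Real.pi/2)
    (hanti : ∀ x : ℝ, 0 ≤ x → τ (x + Real.pi) = -τ x)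
    (hv1 : ∀ x : ℝ, 0 ≤ x → x ≤ Real.pi/2 → τ x = x)
    (hv2 : ∀ x : ℝ, Real.pi/2 ≤ x → x ≤ Real.pi → τ x = Real.pi - x)
    (s : ℂ) (hs : 0 < s.re) :
    IntegrableOn (fun x : ℝ => (τ x : ℂ) * Complex.exp (-(s * x))) (Set.Ioi 0) ∧
    ∫ x in Set.Ioi (0:ℝ), (τ x : ℂ) * Complex.exp (-(s * x))
      = (1 - Complex.exp (-(Real.pi * s / 2))) ^ 2
        / (s ^ 2 * (1 + Complex.exp (-(Real.pi * s)))) := by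
  have hπ := Real.pi_pos
  have hs0 : s ≠ 0 := by
    intro h; rw [h] at hs; simp at hs
  set f : ℝ → ℂ := fun x : ℝ => (τ x : ℂ) * Complex.exp (-(s * x)) with hf
  have hcont : Continuous f := by
    exact (Complex.continuous_ofReal.comp hcτ).mul
      (Complex.continuous_exp.comp ((continuous_const.mul Complex.continuous_ofReal).neg))
  -- integrability
  have hInt : IntegrableOn f (Set.Ioi 0) := by
    refine Integrable.mono' ((exp_neg_integrableOn_Ioi 0 hs).const_mul (Real.pi/2))
      hcont.aestronglyMeasurable.restrict ?_
    filter_upwards with x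
    have hre : (-(s * (x:ℂ))).re = -s.re * x := by
      simp [Complex.mul_re]
    rw [hf]
    simp only [norm_mul, Complex.norm_real, Real.norm_eq_abs, Complex.norm_exp, hre]
    exact mul_le_mul_of_nonneg_right (hab x) (Real.exp_nonneg _)
  refine ⟨hInt, ?_⟩
  -- functional equation
  set E : ℂ := Complex.exp (-(Real.pi * s)) with hE
  have hE1 : (1:ℂ) + E ≠ 0 := by
    intro h
    have hEeq : E = -1 := by linear_combination h
    have habs := congrArg (‖·‖) hEeq
    rw [hE, Complex.norm_exp] at habs
    simp only [norm_neg, norm_one] at habs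
    have hre : (-((Real.pi:ℂ) * s)).re = -(Real.pi * s.re) := by
      simp [Complex.mul_re]
    rw [hre] at habs
    have := (Real.exp_eq_one_iff _).1 habs
    nlinarith
  set L : ℂ := ∫ x in Set.Ioi (0:ℝ), f x with hL
  set A : ℂ := ∫ x in Set.Ioc (0:ℝ) Real.pi, f x with hA
  have hsplit : L = A + ∫ x in Set.Ioi Real.pi, f x := by
    rw [hL, hA, ← setIntegral_union (Set.Ioc_disjoint_Ioi le_rfl) measurableSet_Ioi
      (hInt.mono_set Set.Ioc_subset_Ioi_self) (hInt.mono_set (Set.Ioi_subset_Ioi hπ.le)),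
      Set.Ioc_union_Ioi_eq_Ioi hπ.le]
  have hshift : ∫ x in Set.Ioi Real.pi, f x = ∫ x in Set.Ioi (0:ℝ), f (x + Real.pi) := by
    have h := (measurePreserving_add_right volume Real.pi).setIntegral_preimage_emb
      (measurableEmbedding_addRight Real.pi) f (Set.Ioi Real.pi)
    rw [Set.preimage_add_const_Ioi, sub_self] at h
    exact h.symm
  have hflip : ∫ x in Set.Ioi (0:ℝ), f (x + Real.pi) = (-E) * L := by
    rw [hL, ← integral_const_mul]
    refine setIntegral_congr_fun measurableSet_Ioi (fun x hx => ?_)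
    have hx0 : (0:ℝ) ≤ x := le_of_lt hx
    rw [hf]
    simp only
    rw [hanti x hx0]
    have hexp : Complex.exp (-(s * ((x + Real.pi : ℝ) : ℂ))) = Complex.exp (-(s * x)) * E := by
      rw [hE, ← Complex.exp_add]
      congr 1
      push_cast
      ring
    rw [hexp]
    push_cast
    ring
  have hkey : L = A + (-E) * L := by conv_lhs => rw [hsplit, hshift, hflip]
  have hLval : L = A / (1 + E) := by
    rw [eq_div_iff hE1]
    linear_combination hkey
  -- compute A
  have hIoc : A = ∫ x in (0:ℝ)..Real.pi, f x := by
    rw [hA, intervalIntegral.integral_of_le hπ.le]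
  have hAsplit : ∫ x in (0:ℝ)..Real.pi, f x
      = (∫ x in (0:ℝ)..(Real.pi/2), f x) + ∫ x in (Real.pi/2:ℝ)..Real.pi, f x :=
    (intervalIntegral.integral_add_adjacent_intervals
      (hcont.intervalIntegrable _ _) (hcont.intervalIntegrable _ _)).symm
  have hA1 : ∫ x in (0:ℝ)..(Real.pi/2), f x
      = ∫ x in (0:ℝ)..(Real.pi/2), ((0:ℂ) + 1 * (x:ℂ)) * Complex.exp (-(s*x)) := by
    refine intervalIntegral.integral_congr (fun x hx => ?_)
    rw [Set.uIcc_of_le (by linarith)] at hx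
    rw [hf]
    simp only
    rw [hv1 x hx.1 hx.2]
    push_cast
    ring
  have hA2 : ∫ x in (Real.pi/2:ℝ)..Real.pi, f x
      = ∫ x in (Real.pi/2:ℝ)..Real.pi, (((Real.pi:ℝ):ℂ) + (-1) * (x:ℂ)) * Complex.exp (-(s*x)) := by
    refine intervalIntegral.integral_congr (fun x hx => ?_)
    rw [Set.uIcc_of_le (by linarith)] at hx
    rw [hf]
    simp only
    rw [hv2 x hx.1 hx.2]
    push_cast
    ring
  rw [hLval, hIoc, hAsplit, hA1, hA2, integral_linear_exp s hs0 0 1 0 (Real.pi/2),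
    integral_linear_exp s hs0 ((Real.pi:ℝ):ℂ) (-1) (Real.pi/2) Real.pi]
  -- normalize exponentials
  have earg0 : -(s * ((0:ℝ):ℂ)) = 0 := by push_cast; ring
  have earg1 : -(s * ((Real.pi/2 : ℝ):ℂ)) = -((Real.pi:ℂ) * s / 2) := by push_cast; ring
  have earg2 : -(s * ((Real.pi:ℝ):ℂ)) = -((Real.pi:ℂ) * s) := by push_cast; ring
  rw [earg0, earg1, earg2, Complex.exp_zero]
  have hq : Complex.exp (-((Real.pi:ℂ) * s)) = Complex.exp (-((Real.pi:ℂ) * s / 2))^2 := by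
    rw [pow_two, ← Complex.exp_add]
    congr 1
    ring
  rw [hE] at hE1
  have hE1' : (1:ℂ) + Complex.exp (-((Real.pi:ℂ) * s / 2))^2 ≠ 0 := by
    rw [← hq]
    exact hE1
  rw [hE, hq]
  push_cast
  rw [← div_div]
  congr 1
  ring


private lemma strip_ne (z : ℂ) (hz : |z.im| < 1) : 1 + Complex.exp (-(Real.pi * z)) ≠ 0 := by
  intro h
  have hπ : ((Real.pi:ℂ)) ≠ 0 := by
    exact_mod_cast Real.pi_ne_zero
  have h1 : Complex.exp (-((Real.pi:ℂ)*z) + Real.pi*Complex.I) = 1 := by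
    rw [Complex.exp_add, Complex.exp_pi_mul_I]
    have hEeq : Complex.exp (-((Real.pi:ℂ)*z)) = -1 := by linear_combination h
    rw [hEeq]; ring
  obtain ⟨n, hn⟩ := Complex.exp_eq_one_iff.1 h1
  have hz' : z = (1 - 2*(n:ℂ)) * Complex.I := by
    have h2 : (Real.pi:ℂ) * z = (Real.pi:ℂ) * ((1 - 2*(n:ℂ)) * Complex.I) := by
      linear_combination -hn
    exact mul_left_cancel₀ hπ h2
  have him : z.im = 1 - 2*(n:ℝ) := by
    have := congrArg Complex.im hz'
    simpa using this
  rw [him, abs_lt] at hz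
  have hn1 : (0:ℝ) < (n:ℝ) := by linarith
  have hn2 : (n:ℝ) < 1 := by linarith
  have : (0:ℤ) < n := by exact_mod_cast hn1
  have : n < 1 := by exact_mod_cast hn2
  omega

private lemma strip_extension :
    ∃ F : ℂ → ℂ, DifferentiableOn ℂ F {s : ℂ | |s.im| < 1} ∧
      ∀ s : ℂ, |s.im| < 1 → s ≠ 0 →
        F s = (1 - Complex.exp (-(Real.pi * s / 2))) ^ 2
          / (s ^ 2 * (1 + Complex.exp (-(Real.pi * s)))) := by
  have hπ : ((Real.pi:ℂ)) ≠ 0 := by exact_mod_cast Real.pi_ne_zero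
  have hd : Differentiable ℂ (dslope Complex.exp 0) := by
    rw [← differentiableOn_univ]
    exact (Complex.differentiableOn_dslope (Filter.univ_mem)).2
      Complex.differentiable_exp.differentiableOn
  refine ⟨fun z => ((Real.pi:ℂ)/2 * dslope Complex.exp 0 (-(Real.pi * z / 2)))^2
      / (1 + Complex.exp (-(Real.pi * z))), ?_, ?_⟩
  · apply DifferentiableOn.div
    · apply DifferentiableOn.pow
      apply DifferentiableOn.const_mul
      exact (hd.comp (((differentiable_id.const_mul _).div_const _).neg)).differentiableOn
    · exact ((Complex.differentiable_exp.comp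
        ((differentiable_id.const_mul _).neg)).const_add 1).differentiableOn
    · exact fun z hz => strip_ne z hz
  · intro z hz hz0
    have hw : (-(((Real.pi:ℂ)) * z / 2) : ℂ) ≠ 0 := by
      intro h
      apply hz0
      have : (Real.pi:ℂ) * z = 0 := by linear_combination (-2:ℂ) * h
      rcases mul_eq_zero.1 this with h' | h'
      · exact absurd h' hπ
      · exact h'
    show ((Real.pi:ℂ)/2 * dslope Complex.exp 0 (-(Real.pi * z / 2)))^2
        / (1 + Complex.exp (-(Real.pi * z)))
      = (1 - Complex.exp (-(Real.pi * z / 2))) ^ 2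
          / (z ^ 2 * (1 + Complex.exp (-(Real.pi * z))))
    rw [dslope_of_ne _ hw, slope_def_field, Complex.exp_zero]
    have key : ((Real.pi:ℂ)/2) * ((Complex.exp (-((Real.pi:ℂ)*z/2)) - 1)/(-((Real.pi:ℂ)*z/2) - 0))
        = (1 - Complex.exp (-((Real.pi:ℂ)*z/2)))/z := by
      rw [sub_zero]
      field_simp
      ring
    rw [key, div_pow, div_div]

end ZigZagProofAux

/-- **The extremal example of Subsection 3.2 of the paper**: the zig-zag
function `τ` is 1-Lipschitz, its Laplace transform equals
`(1−e^{−πs/2})²/(s²(1+e^{−πs}))` on `Re s > 0` and extends analytically to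
the strip `|Im s| < 1`, and `limsup_{x→∞} |τ(x)| = π/2`. -/
theorem extremal_example_optimality
    (τ : ℝ → ℝ)
    (hτ0 : ∀ x : ℝ, x ≤ 0 → τ x = 0)
    (hτ1 : ∀ x : ℝ, 0 ≤ x → x ≤ Real.pi / 2 → τ x = x)
    (hτ2 : ∀ N : ℕ, 0 < N → N % 4 = 2 → ∀ x : ℝ,
      ((N : ℝ) - 1) * (Real.pi / 2) ≤ x → x ≤ ((N : ℝ) + 1) * (Real.pi / 2) →
      τ x = -x + (N : ℝ) * (Real.pi / 2))
    (hτ3 : ∀ N : ℕ, 0 < N → N % 4 = 0 → ∀ x : ℝ,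
      ((N : ℝ) - 1) * (Real.pi / 2) ≤ x → x ≤ ((N : ℝ) + 1) * (Real.pi / 2) →
      τ x = x - (N : ℝ) * (Real.pi / 2)) :
    (∀ x y : ℝ, |τ x - τ y| ≤ |x - y|) ∧
    (∀ s : ℂ, 0 < s.re →
      (IntegrableOn (fun x : ℝ => (τ x : ℂ) * Complex.exp (-(s * x))) (Set.Ioi 0)) ∧
      ∫ x in Set.Ioi (0:ℝ), (τ x : ℂ) * Complex.exp (-(s * x))
        = (1 - Complex.exp (-(Real.pi * s / 2))) ^ 2
          / (s ^ 2 * (1 + Complex.exp (-(Real.pi * s))))) ∧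
    (∃ F : ℂ → ℂ, DifferentiableOn ℂ F {s : ℂ | |s.im| < 1} ∧
      ∀ s : ℂ, |s.im| < 1 → s ≠ 0 →
        F s = (1 - Complex.exp (-(Real.pi * s / 2))) ^ 2
          / (s ^ 2 * (1 + Complex.exp (-(Real.pi * s))))) ∧
    Filter.limsup (fun x : ℝ => |τ x|) atTop = Real.pi / 2 := by
  have hπ := Real.pi_pos
  have hlip : ∀ x y : ℝ, |τ x - τ y| ≤ |x - y| := by
    intro x y
    rw [tau_eq_gZ τ hτ0 hτ1 hτ2 hτ3 x, tau_eq_gZ τ hτ0 hτ1 hτ2 hτ3 y]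
    exact gZ_lip x y
  have hab := tau_abs_le τ hτ0 hτ1 hτ2 hτ3
  have hcτ : Continuous τ := by
    have hl : LipschitzWith 1 τ := LipschitzWith.of_dist_le_mul (fun x y => by
      rw [Real.dist_eq, Real.dist_eq]
      simpa using hlip x y)
    exact hl.continuous
  have hanti := tau_anti τ hτ1 hτ2 hτ3
  have hv2 : ∀ x : ℝ, Real.pi/2 ≤ x → x ≤ Real.pi → τ x = Real.pi - x := by
    intro x h1 h2
    rw [hτ2 2 (by omega) (by omega) x (by push_cast; linarith) (by push_cast; linarith)]
    push_cast
    ring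
  refine ⟨hlip, fun s hs => laplace_eval τ hcτ hab hanti hτ1 hv2 s hs, strip_extension, ?_⟩
  have hfr : ∃ᶠ x in atTop, Real.pi/2 ≤ |τ x| := by
    rw [Filter.frequently_atTop]
    intro b
    refine ⟨Real.pi/2 + 2*Real.pi*(⌈b⌉₊:ℝ), ?_, ?_⟩
    · have h1 : b ≤ (⌈b⌉₊:ℝ) := Nat.le_ceil b
      nlinarith [Real.pi_gt_three, (Nat.cast_nonneg (α := ℝ) ⌈b⌉₊),
        mul_nonneg (by nlinarith [Real.pi_gt_three] : (0:ℝ) ≤ 2*Real.pi - 1)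
          ((Nat.cast_nonneg (α := ℝ) ⌈b⌉₊))]
    · rw [tau_peak τ hτ1 hτ3 ⌈b⌉₊, abs_of_nonneg (by linarith)]
  refine le_antisymm ?_ ?_
  · exact Filter.limsup_le_of_le (Filter.IsCoboundedUnder.of_frequently_ge hfr)
      (Filter.Eventually.of_forall (fun x => hab x))
  · exact Filter.le_limsup_of_frequently_le hfr (Filter.isBoundedUnder_of ⟨Real.pi/2, hab⟩)
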